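/- Let U_1, ..., U_N be independent and identically distributed real-valued random variables, let τ_1 < τ_2 < ... < τ_M be increasing thresholds, and let K_i = #{j ∈ {1,...,N} : U_j > τ_i} for i = 1,...,M. Then the sequence (K_1, ..., K_M) has the first-order Markov property: for every i ∈ {2,...,M} and all values k_1 ≥ k_2 ≥ ... ≥ k_{i−1} with P(K_1 = k_1, ..., K_{i−1} = k_{i−1}) > 0, and every k, one has P(K_i = k | K_1 = k_1, ..., K_{i−1} = k_{i−1}) = P(K_i = k | K_{i−1} = k_{i−1}). -/

import Mathlib

open MeasureTheory ProbabilityTheory Finset ENNReal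

namespace ExcAux

noncomputable def cnt {α : Type*} [Fintype α] (t : ℝ) (x : α → ℝ) : ℕ :=
  (Finset.univ.filter (fun j => t < x j)).card

lemma cnt_eq_sum {α : Type*} [Fintype α] (t : ℝ) (x : α → ℝ) :
    cnt t x = ∑ j, if t < x j then 1 else 0 := Finset.card_filter _ _

lemma measurable_cnt {α : Type*} [Fintype α] (t : ℝ) :
    Measurable (fun x : α → ℝ => cnt t x) := by
  have h : (fun x : α → ℝ => cnt t x) = fun x => ∑ j, if t < x j then 1 else 0 :=
    funext fun x => cnt_eq_sum t x
  rw [h]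
  exact Finset.measurable_sum _ fun j _ =>
    Measurable.ite (measurableSet_lt measurable_const (measurable_pi_apply j))
      measurable_const measurable_const

lemma cnt_split {N : ℕ} (t : ℝ) (x : Fin N → ℝ) (s : Finset (Fin N)) :
    cnt t x = cnt t (fun j : {j // j ∈ s} => x j) + cnt t (fun j : {j // ¬ j ∈ s} => x j) := by
  classical
  simp only [cnt_eq_sum]
  rw [← Finset.sum_filter_add_sum_filter_not Finset.univ (· ∈ s)
    (fun j => if t < x j then 1 else 0)]
  congr 1
  · exact Finset.sum_subtype _ (by simp) _
  · exact Finset.sum_subtype _ (by simp) _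

lemma cnt_all {α : Type*} [Fintype α] {t : ℝ} {x : α → ℝ} (h : ∀ j, t < x j) :
    cnt t x = Fintype.card α := by
  rw [cnt, Finset.filter_true_of_mem fun j _ => h j, Finset.card_univ]

lemma cnt_none {α : Type*} [Fintype α] {t : ℝ} {x : α → ℝ} (h : ∀ j, ¬ t < x j) :
    cnt t x = 0 := by
  rw [cnt, Finset.filter_false_of_mem fun j _ => h j, Finset.card_empty]

lemma measurableSet_level {α : Type*} [Fintype α] (t : ℝ) (n : ℕ) :
    MeasurableSet {x : α → ℝ | cnt t x = n} :=
  measurable_cnt t (measurableSet_singleton n)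

lemma measurableSet_A {N : ℕ} (τ : ℝ) (m : ℕ) (L : Finset ℕ) (ts : ℕ → ℝ) (vs : ℕ → ℕ) :
    MeasurableSet {x : Fin N → ℝ | cnt τ x = m ∧ ∀ l ∈ L, cnt (ts l) x = vs l} := by
  have : {x : Fin N → ℝ | cnt τ x = m ∧ ∀ l ∈ L, cnt (ts l) x = vs l}
      = {x | cnt τ x = m} ∩ ⋂ l ∈ L, {x | cnt (ts l) x = vs l} := by
    ext x; simp [Set.mem_iInter]
  rw [this]
  exact (measurableSet_level τ m).inter
    (MeasurableSet.biInter (L.countable_toSet) fun l _ => measurableSet_level _ _)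

lemma pi_app_congr {ι : Type*} {α : ι → Type*} {h1 h2 : Fintype ι}
    [∀ i, MeasurableSpace (α i)] (μf : ∀ i, Measure (α i)) (t : Set (∀ i, α i)) :
    @Measure.pi ι α h1 _ μf t = @Measure.pi ι α h2 _ μf t := by
  cases Subsingleton.elim h1 h2; rfl

lemma key {N : ℕ} (μ : Measure ℝ) [IsProbabilityMeasure μ]
    (τ τ' : ℝ) (hττ' : τ < τ') (m k : ℕ) (L : Finset ℕ) (ts : ℕ → ℝ)
    (hts : ∀ l ∈ L, ts l < τ) (vs : ℕ → ℕ) :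
    ∃ S : ℝ≥0∞,
      Measure.pi (fun _ : Fin N => μ) {x | cnt τ x = m ∧ ∀ l ∈ L, cnt (ts l) x = vs l}
        = μ (Set.Ioi τ) ^ m * S ∧
      Measure.pi (fun _ : Fin N => μ)
          ({x | cnt τ x = m ∧ ∀ l ∈ L, cnt (ts l) x = vs l} ∩ {x | cnt τ' x = k})
        = Measure.pi (fun _ : Fin m => μ) {y | (∀ a, τ < y a) ∧ cnt τ' y = k} * S := by
  classical
  set ν := Measure.pi (fun _ : Fin N => μ) with hν
  set p : ℝ≥0∞ := μ (Set.Ioi τ) ^ m with hp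
  set r : ℝ≥0∞ := Measure.pi (fun _ : Fin m => μ) {y : Fin m → ℝ | (∀ a, τ < y a) ∧ cnt τ' y = k}
    with hr
  set A1 : Set (Fin N → ℝ) := {x | cnt τ x = m ∧ ∀ l ∈ L, cnt (ts l) x = vs l} with hA1def
  set A2 : Set (Fin N → ℝ) := A1 ∩ {x | cnt τ' x = k} with hA2def
  set E : Finset (Fin N) → Set (Fin N → ℝ) := fun s => {x | ∀ j, τ < x j ↔ j ∈ s} with hE
  -- complement part event
  let D : ∀ s : Finset (Fin N), Set ({j : Fin N // ¬ j ∈ s} → ℝ) := fun s =>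
    {z | (∀ j, ¬ τ < z j) ∧ ∀ l ∈ L, m + cnt (ts l) z = vs l}
  have measD : ∀ s, MeasurableSet (D s) := by
    intro s
    have h1 : MeasurableSet {z : {j : Fin N // ¬ j ∈ s} → ℝ | ∀ j, ¬ τ < z j} := by
      have : {z : {j : Fin N // ¬ j ∈ s} → ℝ | ∀ j, ¬ τ < z j}
          = ⋂ j, {z : {j : Fin N // ¬ j ∈ s} → ℝ | τ < z j}ᶜ := by
        ext z; simp [Set.mem_iInter]
      rw [this]
      exact MeasurableSet.iInter fun j =>
        (measurableSet_lt measurable_const (measurable_pi_apply j)).compl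
    have h2 : MeasurableSet {z : {j : Fin N // ¬ j ∈ s} → ℝ |
        ∀ l ∈ L, m + cnt (ts l) z = vs l} := by
      have : {z : {j : Fin N // ¬ j ∈ s} → ℝ | ∀ l ∈ L, m + cnt (ts l) z = vs l}
          = ⋂ l ∈ L, (fun z : {j : Fin N // ¬ j ∈ s} → ℝ => m + cnt (ts l) z) ⁻¹' {vs l} := by
        ext z; simp [Set.mem_iInter]
      rw [this]
      exact MeasurableSet.biInter (L.countable_toSet) fun l _ =>
        (measurable_const.add (measurable_cnt (ts l))) (measurableSet_singleton (vs l))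
    have : D s = {z : {j : Fin N // ¬ j ∈ s} → ℝ | ∀ j, ¬ τ < z j} ∩
        {z | ∀ l ∈ L, m + cnt (ts l) z = vs l} := rfl
    rw [this]; exact h1.inter h2
  set T : Finset (Fin N) → ℝ≥0∞ := fun s =>
    if s.card = m then Measure.pi (fun _ : {j : Fin N // ¬ j ∈ s} => μ) (D s) else 0 with hT
  have measE : ∀ s, MeasurableSet (E s) := by
    intro s
    have : E s = ⋂ j, {x : Fin N → ℝ | τ < x j ↔ j ∈ s} := by
      ext x; simp [hE, Set.mem_iInter]
    rw [this]
    refine MeasurableSet.iInter fun j => ?_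
    by_cases hj : j ∈ s
    · simp only [hj, iff_true]
      exact measurableSet_lt measurable_const (measurable_pi_apply j)
    · simp only [hj, iff_false]
      exact (measurableSet_lt measurable_const (measurable_pi_apply j)).compl
  have measA1 : MeasurableSet A1 := measurableSet_A τ m L ts vs
  have measA2 : MeasurableSet A2 := measA1.inter (measurableSet_level τ' k)
  -- cnt computations on E s
  have hEcnt_top : ∀ s : Finset (Fin N), ∀ x ∈ E s, cnt τ x = s.card := by
    intro s x hx
    have e1 : cnt τ (fun j : {j // j ∈ s} => x j) = Fintype.card {j // j ∈ s} :=
      cnt_all fun j => (hx j.1).mpr j.2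
    have e2 : cnt τ (fun j : {j // ¬ j ∈ s} => x j) = 0 :=
      cnt_none fun j h => j.2 ((hx j.1).mp h)
    rw [cnt_split τ x s, e1, e2, Fintype.card_coe, add_zero]
  -- partition identity
  have hpartition : ∀ (B : Set (Fin N → ℝ)), MeasurableSet B →
      ν B = ∑ s : Finset (Fin N), ν (B ∩ E s) := by
    intro B hB
    have hcover : B = ⋃ s ∈ (Finset.univ : Finset (Finset (Fin N))), B ∩ E s := by
      ext x
      simp only [Set.mem_iUnion, Finset.mem_univ, Set.mem_inter_iff, exists_prop, true_and]
      constructor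
      · intro hx
        exact ⟨Finset.univ.filter (fun j => τ < x j), hx, fun j => by simp⟩
      · rintro ⟨s, hx, _⟩; exact hx
    have hdisj : Set.PairwiseDisjoint (↑(Finset.univ : Finset (Finset (Fin N))))
        (fun s => B ∩ E s) := by
      intro s _ t _ hst
      refine Set.disjoint_left.mpr ?_
      rintro x ⟨_, hxs⟩ ⟨_, hxt⟩
      exact hst (Finset.ext fun j => ((hxs j).symm.trans (hxt j)))
    calc ν B = ν (⋃ s ∈ (Finset.univ : Finset (Finset (Fin N))), B ∩ E s) := by rw [← hcover]
      _ = ∑ s : Finset (Fin N), ν (B ∩ E s) :=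
        measure_biUnion_finset hdisj (fun s _ => hB.inter (measE s))
  -- per-piece evaluation
  have hstep : ∀ s : Finset (Fin N), ν (A1 ∩ E s) = p * T s ∧ ν (A2 ∩ E s) = r * T s := by
    intro s
    by_cases hs : s.card = m
    · -- main case
      have hTs : T s = Measure.pi (fun _ : {j : Fin N // ¬ j ∈ s} => μ) (D s) := by
        rw [hT]; simp [hs]
      set e := MeasurableEquiv.piEquivPiSubtypeProd (fun _ : Fin N => ℝ) (· ∈ s) with he
      have hmp := measurePreserving_piEquivPiSubtypeProd (fun _ : Fin N => μ) (· ∈ s)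
      set C1 : Set ({j : Fin N // j ∈ s} → ℝ) := {y | ∀ j, τ < y j} with hC1
      set C2 : Set ({j : Fin N // j ∈ s} → ℝ) := {y | (∀ j, τ < y j) ∧ cnt τ' y = k} with hC2
      have measC1 : MeasurableSet C1 := by
        have : C1 = ⋂ j, {y : {j : Fin N // j ∈ s} → ℝ | τ < y j} := by
          ext y; simp [hC1, Set.mem_iInter]
        rw [this]
        exact MeasurableSet.iInter fun j =>
          measurableSet_lt measurable_const (measurable_pi_apply j)
      have measC2 : MeasurableSet C2 := by
        have : C2 = C1 ∩ {y | cnt τ' y = k} := rfl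
        rw [this]; exact measC1.inter (measurableSet_level τ' k)
      -- the two set identities
      have memiff : ∀ (x : Fin N → ℝ) (C : Set ({j : Fin N // j ∈ s} → ℝ)),
          (x ∈ e ⁻¹' (C ×ˢ D s)) ↔
            ((fun j : {j : Fin N // j ∈ s} => x j) ∈ C ∧
              (fun j : {j : Fin N // ¬ j ∈ s} => x j) ∈ D s) := by
        intro x C
        simp [he, MeasurableEquiv.piEquivPiSubtypeProd, Equiv.piEquivPiSubtypeProd,
          Set.mem_prod]
      -- auxiliary equivalence between A-conditions and product form, given E s
      have main_iff : ∀ x : Fin N → ℝ,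
          (x ∈ A1 ∩ E s) ↔ ((∀ j : {j : Fin N // j ∈ s}, τ < x j) ∧
            (fun j : {j : Fin N // ¬ j ∈ s} => x j) ∈ D s) := by
        intro x
        constructor
        · rintro ⟨⟨hcm, hcl⟩, hxE⟩
          have hin : ∀ j : {j : Fin N // j ∈ s}, τ < x j := fun j => (hxE j.1).mpr j.2
          have hout : ∀ j : {j : Fin N // ¬ j ∈ s}, ¬ τ < x j :=
            fun j => fun h => j.2 ((hxE j.1).mp h)
          refine ⟨hin, hout, fun l hl => ?_⟩
          have e1 : cnt (ts l) (fun j : {j // j ∈ s} => x j) = Fintype.card {j // j ∈ s} :=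
            cnt_all fun j => lt_trans (hts l hl) (hin j)
          have := hcl l hl
          rw [cnt_split (ts l) x s, e1, Fintype.card_coe, hs] at this
          exact this
        · rintro ⟨hin, hout, hD⟩
          have hxE : x ∈ E s := by
            intro j
            constructor
            · intro h
              by_contra hj
              exact hout ⟨j, hj⟩ h
            · intro hj; exact hin ⟨j, hj⟩
          have hcτ : cnt τ x = m := by rw [hEcnt_top s x hxE, hs]
          refine ⟨⟨hcτ, fun l hl => ?_⟩, hxE⟩
          have e1 : cnt (ts l) (fun j : {j // j ∈ s} => x j) = Fintype.card {j // j ∈ s} :=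
            cnt_all fun j => lt_trans (hts l hl) (hin j)
          show cnt (ts l) x = vs l
          rw [cnt_split (ts l) x s, e1, Fintype.card_coe, hs]
          exact hD l hl
      have hI1 : A1 ∩ E s = e ⁻¹' (C1 ×ˢ D s) := by
        ext x; rw [memiff x C1]; exact main_iff x
      have hI2 : A2 ∩ E s = e ⁻¹' (C2 ×ˢ D s) := by
        ext x
        rw [memiff x C2]
        have h1 := main_iff x
        constructor
        · rintro ⟨⟨hxA1, hxk⟩, hxE⟩
          obtain ⟨ha, hb⟩ := h1.mp ⟨hxA1, hxE⟩
          refine ⟨⟨ha, ?_⟩, hb⟩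
          have e2 : cnt τ' (fun j : {j // ¬ j ∈ s} => x j) = 0 :=
            cnt_none fun j h => j.2 ((hxE j.1).mp (lt_trans hττ' h))
          have heq : cnt τ' x = cnt τ' (fun j : {j : Fin N // j ∈ s} => x j) := by
            rw [cnt_split τ' x s, e2, add_zero]
          show cnt τ' (fun j : {j : Fin N // j ∈ s} => x j) = k
          rw [← heq]; exact hxk
        · rintro ⟨⟨ha, hk⟩, hb⟩
          obtain ⟨hxA1, hxE⟩ := h1.mpr ⟨ha, hb⟩
          refine ⟨⟨hxA1, ?_⟩, hxE⟩
          have e2 : cnt τ' (fun j : {j // ¬ j ∈ s} => x j) = 0 :=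
            cnt_none fun j h => j.2 ((hxE j.1).mp (lt_trans hττ' h))
          have heq : cnt τ' x = cnt τ' (fun j : {j : Fin N // j ∈ s} => x j) := by
            rw [cnt_split τ' x s, e2, add_zero]
          show cnt τ' x = k
          rw [heq]; exact hk
      -- measures of C1 and C2
      have hC1meas : Measure.pi (fun _ : {j : Fin N // j ∈ s} => μ) C1 = p := by
        have : C1 = Set.pi Set.univ (fun _ : {j : Fin N // j ∈ s} => Set.Ioi τ) := by
          ext y; simp [hC1, Set.mem_univ_pi, Set.mem_Ioi]
        rw [this, Measure.pi_pi]
        simp [Finset.prod_const, Fintype.card_coe, hs, hp]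
      have hC2meas : Measure.pi (fun _ : {j : Fin N // j ∈ s} => μ) C2 = r := by
        have hcard : Fintype.card {j : Fin N // j ∈ s} = m := by
          rw [Fintype.card_coe, hs]
        let f : Fin m ≃ {j : Fin N // j ∈ s} := (finCongr hs.symm).trans s.equivFin.symm
        have hmp2 := measurePreserving_piCongrLeft (fun _ : {j : Fin N // j ∈ s} => μ) f
        have hpre : (MeasurableEquiv.piCongrLeft (fun _ => ℝ) f) ⁻¹' C2
            = {y : Fin m → ℝ | (∀ a, τ < y a) ∧ cnt τ' y = k} := by
          ext z
          have happ : ∀ a : Fin m,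
              (MeasurableEquiv.piCongrLeft (fun _ => ℝ) f) z (f a) = z a := by
            intro a
            rw [MeasurableEquiv.coe_piCongrLeft]
            exact Equiv.piCongrLeft_apply_apply (fun _ => ℝ) f z a
          simp only [Set.mem_preimage, hC2, Set.mem_setOf_eq]
          constructor
          · rintro ⟨h1, h2⟩
            refine ⟨fun a => by rw [← happ a]; exact h1 (f a), ?_⟩
            rw [← h2]
            unfold cnt
            refine Finset.card_equiv f (fun a => ?_)
            simp only [Finset.mem_filter, Finset.mem_univ, true_and, happ a]
          · rintro ⟨h1, h2⟩
            constructor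
            · intro j
              have : j = f (f.symm j) := (Equiv.apply_symm_apply f j).symm
              rw [this, happ]
              exact h1 _
            · rw [← h2]
              unfold cnt
              refine (Finset.card_equiv f (fun a => ?_)).symm
              simp only [Finset.mem_filter, Finset.mem_univ, true_and, happ a]
        have := hmp2.measure_preimage measC2.nullMeasurableSet
        rw [MeasurableEquiv.coe_piCongrLeft] at hpre this
        rw [← this, hpre, hr]
      constructor
      · rw [hI1, hmp.measure_preimage ((measC1.prod (measD s)).nullMeasurableSet),
          Measure.prod_prod, hTs]
        congr 1
        exact (pi_app_congr _ _).trans hC1meas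
      · rw [hI2, hmp.measure_preimage ((measC2.prod (measD s)).nullMeasurableSet),
          Measure.prod_prod, hTs]
        congr 1
        exact (pi_app_congr _ _).trans hC2meas
    · -- degenerate case: card mismatch
      have hTs : T s = 0 := by rw [hT]; simp [hs]
      have hempty : A1 ∩ E s = ∅ := by
        ext x
        simp only [Set.mem_inter_iff, Set.mem_empty_iff_false, iff_false, not_and]
        intro hxA hxE
        exact hs ((hEcnt_top s x hxE).symm.trans hxA.1)
      have hempty2 : A2 ∩ E s = ∅ := by
        rw [hA2def, Set.inter_right_comm, hempty, Set.empty_inter]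
      rw [hempty, hempty2, hTs]
      simp
  refine ⟨∑ s : Finset (Fin N), T s, ?_, ?_⟩
  · rw [hpartition A1 measA1, Finset.mul_sum]
    exact Finset.sum_congr rfl fun s _ => (hstep s).1
  · rw [hpartition A2 measA2, Finset.mul_sum]
    exact Finset.sum_congr rfl fun s _ => (hstep s).2


lemma chain {M : ℕ} (τs : ℕ → ℝ) (hτ : ∀ i, 1 ≤ i → i < M → τs i < τs (i + 1)) :
    ∀ a b, 1 ≤ a → a < b → b ≤ M → τs a < τs b := by
  intro a b ha hab hbM
  induction b with
  | zero => omega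
  | succ n ih =>
    rcases Nat.lt_or_ge a n with h | h
    · exact lt_trans (ih (by omega) (by omega)) (hτ n (by omega) (by omega))
    · have han : a = n := by omega
      subst han
      exact hτ a (by omega) (by omega)

lemma enn_aux (p r S : ℝ≥0∞) (hS0 : S ≠ 0) (hS : S ≠ ∞) : (p * S)⁻¹ * (r * S) = p⁻¹ * r := by
  rw [ENNReal.mul_inv (Or.inr hS) (Or.inr hS0), mul_mul_mul_comm,
    ENNReal.inv_mul_cancel hS0 hS, mul_one]

end ExcAux

open ExcAux in
/-- For iid real-valued random variables `U_1, ..., U_N` and increasing thresholds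
`τ_1 < ... < τ_M`, the exceedance counts `K_i = #{j : U_j > τ_i}` form a first-order
Markov sequence: conditioning on `K_1 = k_1, ..., K_{i-1} = k_{i-1}` is the same as
conditioning on `K_{i-1} = k_{i-1}` alone. -/
theorem exceedance_counts_markov
    {Ω : Type*} [MeasureSpace Ω] [IsProbabilityMeasure (ℙ : Measure Ω)]
    (N : ℕ) (U : Fin N → Ω → ℝ) (hmeas : ∀ j, Measurable (U j))
    (hindep : iIndepFun U ℙ)
    (hident : ∀ i j, Measure.map (U i) ℙ = Measure.map (U j) ℙ)
    (M : ℕ) (τs : ℕ → ℝ) (hτ : ∀ i, 1 ≤ i → i < M → τs i < τs (i + 1))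
    (K : ℕ → Ω → ℕ)
    (hK : ∀ i ω, K i ω = (Finset.univ.filter (fun j => τs i < U j ω)).card)
    (i : ℕ) (hi2 : 2 ≤ i) (hiM : i ≤ M)
    (ks : ℕ → ℕ) (hks : ∀ a b, 1 ≤ a → a ≤ b → b ≤ i - 1 → ks b ≤ ks a)
    (hpos : 0 < ℙ {ω | ∀ l, 1 ≤ l → l ≤ i - 1 → K l ω = ks l})
    (k : ℕ) :
    ℙ[|{ω | ∀ l, 1 ≤ l → l ≤ i - 1 → K l ω = ks l}] {ω | K i ω = k}
      = ℙ[|{ω | K (i - 1) ω = ks (i - 1)}] {ω | K i ω = k} := by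
  classical
  rcases Nat.eq_zero_or_pos N with hN | hN
  · -- degenerate case N = 0
    subst hN
    have hK0 : ∀ l ω, K l ω = 0 := fun l ω => by rw [hK]; simp
    have hQ : ∀ l, 1 ≤ l → l ≤ i - 1 → ks l = 0 := by
      intro l h1 h2
      by_contra hne
      have hempty : {ω : Ω | ∀ l, 1 ≤ l → l ≤ i - 1 → K l ω = ks l} = ∅ :=
        Set.eq_empty_iff_forall_notMem.mpr fun ω h =>
          hne ((h l h1 h2).symm.trans (hK0 l ω))
      rw [hempty] at hpos
      simp at hpos
    have h1 : {ω : Ω | ∀ l, 1 ≤ l → l ≤ i - 1 → K l ω = ks l} = Set.univ :=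
      Set.eq_univ_iff_forall.mpr fun ω l hl1 hl2 => (hK0 l ω).trans (hQ l hl1 hl2).symm
    have h2 : {ω : Ω | K (i - 1) ω = ks (i - 1)} = Set.univ :=
      Set.eq_univ_iff_forall.mpr fun ω => (hK0 _ ω).trans (hQ (i - 1) (by omega) le_rfl).symm
    rw [h1, h2]
  · -- main case
    set μc : Measure ℝ := Measure.map (U ⟨0, hN⟩) ℙ with hμc
    have hμcprob : IsProbabilityMeasure μc :=
      Measure.isProbabilityMeasure_map (hmeas _).aemeasurable
    set V : Ω → (Fin N → ℝ) := fun ω j => U j ω with hV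
    have hVmeas : Measurable V := measurable_pi_lambda _ hmeas
    have hmap : Measure.map V ℙ = Measure.pi (fun _ : Fin N => μc) := by
      refine (Measure.pi_eq fun t ht => ?_).symm
      rw [Measure.map_apply hVmeas (MeasurableSet.univ_pi ht)]
      have hpre : V ⁻¹' (Set.pi Set.univ t) = ⋂ j ∈ Finset.univ, U j ⁻¹' (t j) := by
        ext ω; simp [Set.mem_pi, hV]
      rw [hpre, hindep.measure_inter_preimage_eq_mul Finset.univ (fun j _ => ht j)]
      exact Finset.prod_congr rfl fun j _ => by
        rw [← Measure.map_apply (hmeas j) (ht j), hident j ⟨0, hN⟩]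
    -- threshold inequalities
    have hlt : τs (i - 1) < τs i := by
      have := chain τs hτ (i - 1) i (by omega) (by omega) hiM
      exact this
    have hts : ∀ l ∈ Finset.Icc 1 (i - 2), τs l < τs (i - 1) := by
      intro l hl
      rw [Finset.mem_Icc] at hl
      exact chain τs hτ l (i - 1) (by omega) (by omega) (by omega)
    have htsB : ∀ l ∈ (∅ : Finset ℕ), τs l < τs (i - 1) := by simp
    -- canonical-space events
    set SetA : Set (Fin N → ℝ) :=
      {x | cnt (τs (i - 1)) x = ks (i - 1) ∧ ∀ l ∈ Finset.Icc 1 (i - 2), cnt (τs l) x = ks l}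
      with hSetA
    set SetB : Set (Fin N → ℝ) :=
      {x | cnt (τs (i - 1)) x = ks (i - 1) ∧ ∀ l ∈ (∅ : Finset ℕ), cnt (τs l) x = ks l}
      with hSetB
    set SetK : Set (Fin N → ℝ) := {x | cnt (τs i) x = k} with hSetK
    have measSetA : MeasurableSet SetA := measurableSet_A _ _ _ _ _
    have measSetB : MeasurableSet SetB := measurableSet_A _ _ _ _ _
    have measSetK : MeasurableSet SetK := measurableSet_level _ _
    have hKc : ∀ l ω, K l ω = cnt (τs l) (V ω) := fun l ω => hK l ω
    -- identify events
    have hAset : {ω : Ω | ∀ l, 1 ≤ l → l ≤ i - 1 → K l ω = ks l} = V ⁻¹' SetA := by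
      ext ω
      simp only [Set.mem_setOf_eq, Set.mem_preimage, hSetA, hKc]
      constructor
      · intro h
        refine ⟨h (i - 1) (by omega) le_rfl, fun l hl => ?_⟩
        rw [Finset.mem_Icc] at hl
        exact h l (by omega) (by omega)
      · rintro ⟨h1, h2⟩ l hl1 hl2
        rcases Nat.lt_or_ge l (i - 1) with h | h
        · exact h2 l (Finset.mem_Icc.mpr ⟨hl1, by omega⟩)
        · have : l = i - 1 := by omega
          rw [this]; exact h1
    have hBset : {ω : Ω | K (i - 1) ω = ks (i - 1)} = V ⁻¹' SetB := by
      ext ω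
      simp only [Set.mem_setOf_eq, Set.mem_preimage, hSetB, hKc, Finset.notMem_empty,
        false_implies, implies_true, and_true]
    have hKset : {ω : Ω | K i ω = k} = V ⁻¹' SetK := by
      ext ω
      simp only [Set.mem_setOf_eq, Set.mem_preimage, hSetK, hKc]
    -- measures via canonical space
    set ν : Measure (Fin N → ℝ) := Measure.pi (fun _ : Fin N => μc) with hνdef
    have hmApp : ∀ (s : Set (Fin N → ℝ)), MeasurableSet s → ℙ (V ⁻¹' s) = ν s := by
      intro s hs
      rw [← hmap, Measure.map_apply hVmeas hs]
    obtain ⟨SA, hA1, hA2⟩ := key μc (τs (i - 1)) (τs i) hlt (ks (i - 1)) k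
      (Finset.Icc 1 (i - 2)) τs hts ks
    obtain ⟨SB, hB1, hB2⟩ := key μc (τs (i - 1)) (τs i) hlt (ks (i - 1)) k
      (∅ : Finset ℕ) τs htsB ks
    set p : ℝ≥0∞ := μc (Set.Ioi (τs (i - 1))) ^ (ks (i - 1)) with hpdef
    set r : ℝ≥0∞ := Measure.pi (fun _ : Fin (ks (i - 1)) => μc)
      {y | (∀ a, τs (i - 1) < y a) ∧ cnt (τs i) y = k} with hrdef
    -- positivity facts
    have hνA : ℙ (V ⁻¹' SetA) = p * SA := by rw [hmApp SetA measSetA]; exact hA1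
    have hνB : ℙ (V ⁻¹' SetB) = p * SB := by rw [hmApp SetB measSetB]; exact hB1
    have hposA : 0 < p * SA := by rw [← hνA, ← hAset]; exact hpos
    have hp0 : p ≠ 0 := fun h => by rw [h, zero_mul] at hposA; exact lt_irrefl _ hposA
    have hSA0 : SA ≠ 0 := fun h => by rw [h, mul_zero] at hposA; exact lt_irrefl _ hposA
    have hone : p * SA ≤ 1 := by
      rw [← hνA]; exact prob_le_one
    have hSAtop : SA ≠ ∞ := by
      intro h
      rw [h, ENNReal.mul_top hp0] at hone
      simp at hone
    have hposB : 0 < p * SB := by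
      rw [← hνB, ← hBset]
      refine lt_of_lt_of_le hpos (measure_mono ?_)
      rw [hAset, hBset]
      refine Set.preimage_mono fun x hx => ?_
      exact ⟨hx.1, fun l hl => absurd hl (Finset.notMem_empty l)⟩
    have hSB0 : SB ≠ 0 := fun h => by rw [h, mul_zero] at hposB; exact lt_irrefl _ hposB
    have honeB : p * SB ≤ 1 := by rw [← hνB]; exact prob_le_one
    have hSBtop : SB ≠ ∞ := by
      intro h
      rw [h, ENNReal.mul_top hp0] at honeB
      simp at honeB
    -- final computation
    have hA1' : ν SetA = p * SA := hA1
    have hA2' : ν (SetA ∩ SetK) = r * SA := hA2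
    have hB1' : ν SetB = p * SB := hB1
    have hB2' : ν (SetB ∩ SetK) = r * SB := hB2
    rw [hAset, hBset, hKset,
      cond_apply (hVmeas measSetA) ℙ, cond_apply (hVmeas measSetB) ℙ,
      ← Set.preimage_inter, ← Set.preimage_inter,
      hmApp _ measSetA, hmApp _ measSetB,
      hmApp _ (measSetA.inter measSetK), hmApp _ (measSetB.inter measSetK),
      hA1', hA2', hB1', hB2',
      enn_aux p r SA hSA0 hSAtop, enn_aux p r SB hSB0 hSBtop]
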